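/- In R₂, the nilpotency degrees of the short monomials are: δ(s)=2, δ(t)=3, δ(ts)=4, δ(st)=3, δ(t²)=2, δ(tst)=4, δ(sts)=2, δ(t²s)=4, δ(st²)=4, where δ(w) is the least n with wⁿ = 0. -/

import Mathlib

/-!
The tree-indexed vector space `V` over `ℚ` with basis the free monoid on two letters
(encoded as `List Bool`, with `false` the letter `0` and `true` the letter `1`).
The recursive matrices `s = [[0,0],[1,0]]` and `t = [[0,t],[0,s]]` of the ring `R₂`
act on the decomposition `V = ℚ·φ ⊕ 0V ⊕ 1V` by the block-matrix recursion.
-/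

noncomputable section

abbrev V : Type := List Bool →₀ ℚ

/-- Prefixing by a letter: the embedding `V → yV`. -/
def pre (b : Bool) : V →ₗ[ℚ] V := Finsupp.lmapDomain ℚ ℚ (List.cons b)

/-- Value of `s = [[0,0],[1,0]]` on a basis word. -/
def Sfun : List Bool → V
  | [] => 0
  | false :: u => Finsupp.single (true :: u) 1
  | true :: _ => 0

/-- Value of `t = [[0,t],[0,s]]` on a basis word, by recursion. -/
def Tfun : List Bool → V
  | [] => 0
  | false :: _ => 0
  | true :: u => pre false (Tfun u) + pre true (Sfun u)

/-- The generator `s` of `R₂`. -/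
def sR : Module.End ℚ V := Finsupp.linearCombination ℚ Sfun

/-- The generator `t` of `R₂`. -/
def tR : Module.End ℚ V := Finsupp.linearCombination ℚ Tfun

/-- The level-preserving operator with block form `[[e,0,0],[0,A,B],[0,C,D]]` on
`V = ℚ·φ ⊕ 0V ⊕ 1V`, written `e ⊕ [[A,B],[C,D]]`. -/
def blk (e : ℚ) (A B C D : Module.End ℚ V) : Module.End ℚ V :=
  Finsupp.linearCombination ℚ (fun w => match w with
    | [] => Finsupp.single ([] : List Bool) e
    | false :: u => pre false (A (Finsupp.single u 1)) + pre true (C (Finsupp.single u 1))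
    | true :: u => pre false (B (Finsupp.single u 1)) + pre true (D (Finsupp.single u 1)))

/-- The monomial in `s, t` given by a word (`false ↦ s`, `true ↦ t`). -/
def mono (w : List Bool) : Module.End ℚ V :=
  (w.map (fun b => if b then tR else sR)).prod

/-- The ring `R₂` generated by `s` and `t` (a non-unital subring of `End ℚ V`). -/
def R2 : NonUnitalSubring (Module.End ℚ V) := NonUnitalSubring.closure {sR, tR}

end

noncomputable section

/-- The nilpotency degree of `w`: the least `n ≥ 1` with `wⁿ = 0`. -/
def delta (w : Module.End ℚ V) : ℕ := sInf {n | 1 ≤ n ∧ w ^ n = 0}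

lemma sR_single (u : List Bool) (c : ℚ) : sR (Finsupp.single u c) = c • Sfun u := by
  simp [sR]

lemma tR_single (u : List Bool) (c : ℚ) : tR (Finsupp.single u c) = c • Tfun u := by
  simp [tR]

lemma pre_single (b : Bool) (u : List Bool) (c : ℚ) :
    pre b (Finsupp.single u c) = Finsupp.single (b :: u) c := by
  simp [pre]

lemma single_cons (b : Bool) (u : List Bool) (c : ℚ) :
    (Finsupp.single (b :: u) c : V) = pre b (Finsupp.single u c) := (pre_single b u c).symm

lemma sR_pf (v : V) : sR (pre false v) = pre true v := by
  induction v using Finsupp.induction_linear with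
  | zero => simp
  | add f g hf hg => simp [map_add, hf, hg]
  | single u c => simp [pre_single, sR_single, Sfun, Finsupp.smul_single]

lemma sR_pt (v : V) : sR (pre true v) = 0 := by
  induction v using Finsupp.induction_linear with
  | zero => simp
  | add f g hf hg => simp [map_add, hf, hg]
  | single u c => simp [pre_single, sR_single, Sfun]

lemma tR_pf (v : V) : tR (pre false v) = 0 := by
  induction v using Finsupp.induction_linear with
  | zero => simp
  | add f g hf hg => simp [map_add, hf, hg]
  | single u c => simp [pre_single, tR_single, Tfun]

lemma tR_pt (v : V) : tR (pre true v) = pre false (tR v) + pre true (sR v) := by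
  induction v using Finsupp.induction_linear with
  | zero => simp
  | add f g hf hg => simp only [map_add, hf, hg]; abel
  | single u c =>
    simp [pre_single, tR_single, sR_single, Tfun, smul_add, map_smul]

end

noncomputable section

lemma s2 (v : V) : sR (sR v) = 0 := by
  induction v using Finsupp.induction_linear with
  | zero => simp
  | add f g hf hg => simp [map_add, hf, hg]
  | single u c =>
    cases u with
    | nil => simp [sR_single, Sfun]
    | cons b u =>
      cases b <;> rw [single_cons] <;> simp [sR_pf, sR_pt]

lemma t3 (v : V) : tR (tR (tR v)) = 0 := by
  induction v using Finsupp.induction_linear with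
  | zero => simp
  | add f g hf hg => simp [map_add, hf, hg]
  | single u c =>
    cases u with
    | nil => simp [tR_single, Tfun]
    | cons b u =>
      cases b <;> rw [single_cons] <;>
        simp [tR_pf, tR_pt, sR_pf, sR_pt, s2, map_add]

lemma st3 (v : V) : sR (tR (sR (tR (sR (tR v))))) = 0 := by
  induction v using Finsupp.induction_linear with
  | zero => simp
  | add f g hf hg => simp [map_add, hf, hg]
  | single u c =>
    cases u with
    | nil => simp [tR_single, Tfun]
    | cons b u =>
      cases b <;> rw [single_cons] <;>
        simp [tR_pf, tR_pt, sR_pf, sR_pt, s2, t3, map_add]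

lemma ts4 (v : V) :
    tR (sR (tR (sR (tR (sR (tR (sR v))))))) = 0 := by
  induction v using Finsupp.induction_linear with
  | zero => simp
  | add f g hf hg => simp [map_add, hf, hg]
  | single u c =>
    cases u with
    | nil => simp [sR_single, Sfun]
    | cons b u =>
      cases b <;> rw [single_cons] <;>
        simp [tR_pf, tR_pt, sR_pf, sR_pt, s2, t3, st3, map_add]

lemma sts2 (v : V) : sR (tR (sR (sR (tR (sR v))))) = 0 := by
  induction v using Finsupp.induction_linear with
  | zero => simp
  | add f g hf hg => simp [map_add, hf, hg]
  | single u c =>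
    cases u with
    | nil => simp [sR_single, Sfun]
    | cons b u =>
      cases b <;> rw [single_cons] <;>
        simp [tR_pf, tR_pt, sR_pf, sR_pt, s2, t3, st3, map_add]

lemma tst4 (v : V) :
    tR (sR (tR (tR (sR (tR (tR (sR (tR (tR (sR (tR v))))))))))) = 0 := by
  induction v using Finsupp.induction_linear with
  | zero => simp
  | add f g hf hg => simp [map_add, hf, hg]
  | single u c =>
    cases u with
    | nil => simp [tR_single, Tfun]
    | cons b u =>
      cases b <;> rw [single_cons] <;>
        simp [tR_pf, tR_pt, sR_pf, sR_pt, s2, t3, st3, map_add]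

lemma t2s4 (v : V) :
    tR (tR (sR (tR (tR (sR (tR (tR (sR (tR (tR (sR v))))))))))) = 0 := by
  induction v using Finsupp.induction_linear with
  | zero => simp
  | add f g hf hg => simp [map_add, hf, hg]
  | single u c =>
    cases u with
    | nil => simp [sR_single, Sfun]
    | cons b u =>
      cases b <;> rw [single_cons] <;>
        simp [tR_pf, tR_pt, sR_pf, sR_pt, s2, t3, st3, map_add]

lemma st24 (v : V) :
    sR (tR (tR (sR (tR (tR (sR (tR (tR (sR (tR (tR v))))))))))) = 0 := by
  induction v using Finsupp.induction_linear with
  | zero => simp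
  | add f g hf hg => simp [map_add, hf, hg]
  | single u c =>
    cases u with
    | nil => simp [tR_single, Tfun]
    | cons b u =>
      cases b <;> rw [single_cons] <;>
        simp [tR_pf, tR_pt, sR_pf, sR_pt, s2, t3, st3, map_add]

end


lemma delta_eq {w : Module.End ℚ V} {n : ℕ} (hn : 2 ≤ n)
    (h0 : w ^ n = 0) (h1 : w ^ (n - 1) ≠ 0) : delta w = n := by
  have hmem : n ∈ {m | 1 ≤ m ∧ w ^ m = 0} := ⟨by omega, h0⟩
  refine le_antisymm (Nat.sInf_le hmem) (le_csInf ⟨n, hmem⟩ ?_)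
  rintro m ⟨hm1, hm0⟩
  by_contra h
  push_neg at h
  apply h1
  have hsplit : n - 1 = m + (n - 1 - m) := by omega
  rw [hsplit, pow_add, hm0, zero_mul]

-- End-level zero identities
lemma sR2_zero : sR ^ 2 = 0 := by
  refine LinearMap.ext fun v => ?_
  simp [pow_succ, Module.End.mul_apply, s2]

lemma tR3_zero : tR ^ 3 = 0 := by
  refine LinearMap.ext fun v => ?_
  simp [pow_succ, Module.End.mul_apply, t3]

lemma ts4_zero : (tR * sR) ^ 4 = 0 := by
  refine LinearMap.ext fun v => ?_
  simp [pow_succ, Module.End.mul_apply, ts4]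

lemma st3_zero : (sR * tR) ^ 3 = 0 := by
  refine LinearMap.ext fun v => ?_
  simp [pow_succ, Module.End.mul_apply, st3]

lemma t22_zero : (tR ^ 2) ^ 2 = 0 := by
  refine LinearMap.ext fun v => ?_
  simp [pow_succ, Module.End.mul_apply, t3]

lemma tst4_zero : (tR * sR * tR) ^ 4 = 0 := by
  refine LinearMap.ext fun v => ?_
  simp [pow_succ, Module.End.mul_apply, tst4]

lemma sts2_zero : (sR * tR * sR) ^ 2 = 0 := by
  refine LinearMap.ext fun v => ?_
  simp [pow_succ, Module.End.mul_apply, sts2]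

lemma t2s4_zero : (tR ^ 2 * sR) ^ 4 = 0 := by
  refine LinearMap.ext fun v => ?_
  simp [pow_succ, Module.End.mul_apply, t2s4]

lemma st24_zero : (sR * tR ^ 2) ^ 4 = 0 := by
  refine LinearMap.ext fun v => ?_
  simp [pow_succ, Module.End.mul_apply, st24]

noncomputable section

-- Step evaluation lemmas on explicit basis words.
lemma Tfun_10 (u : List Bool) :
    Tfun (true :: false :: u) = Finsupp.single (true :: true :: u) 1 := by
  simp [Tfun, Sfun, pre_single]

lemma Tfun_110 (u : List Bool) :
    Tfun (true :: true :: false :: u) = Finsupp.single (false :: true :: true :: u) 1 := by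
  simp [Tfun, Sfun, Tfun_10, pre_single]

lemma Tfun_1110 (u : List Bool) :
    Tfun (true :: true :: true :: false :: u) =
      Finsupp.single (false :: false :: true :: true :: u) 1 := by
  simp [Tfun, Sfun, Tfun_110, pre_single]

lemma Tfun_11110 (u : List Bool) :
    Tfun (true :: true :: true :: true :: false :: u) =
      Finsupp.single (false :: false :: false :: true :: true :: u) 1 := by
  simp [Tfun, Sfun, Tfun_1110, pre_single]

lemma Tfun_111110 (u : List Bool) :
    Tfun (true :: true :: true :: true :: true :: false :: u) =
      Finsupp.single (false :: false :: false :: false :: true :: true :: u) 1 := by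
  simp [Tfun, Sfun, Tfun_11110, pre_single]

lemma s1_apply (v : V) : (sR ^ 1) v = sR (v) := by
  simp [pow_succ, Module.End.mul_apply]

lemma s1_ne : (sR ^ 1) ≠ 0 := by
  intro h
  have h2 := LinearMap.congr_fun h (Finsupp.single [false] (1:ℚ))
  rw [s1_apply, LinearMap.zero_apply] at h2
  simp only [sR_single, tR_single, one_smul, Sfun, map_zero, Tfun_10, Tfun_110,
    Tfun_1110, Tfun_11110, Tfun_111110, Finsupp.single_eq_zero] at h2
  exact one_ne_zero h2

lemma t2_apply (v : V) : (tR ^ 2) v = tR (tR (v)) := by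
  simp [pow_succ, Module.End.mul_apply]

lemma t2_ne : (tR ^ 2) ≠ 0 := by
  intro h
  have h2 := LinearMap.congr_fun h (Finsupp.single [true, false, false] (1:ℚ))
  rw [t2_apply, LinearMap.zero_apply] at h2
  simp only [sR_single, tR_single, one_smul, Sfun, map_zero, Tfun_10, Tfun_110,
    Tfun_1110, Tfun_11110, Tfun_111110, Finsupp.single_eq_zero] at h2
  exact one_ne_zero h2

lemma ts3_apply (v : V) : ((tR * sR) ^ 3) v = tR (sR (tR (sR (tR (sR (v)))))) := by
  simp [pow_succ, Module.End.mul_apply]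

lemma ts3_ne : ((tR * sR) ^ 3) ≠ 0 := by
  intro h
  have h2 := LinearMap.congr_fun h (Finsupp.single [false, true, false, false] (1:ℚ))
  rw [ts3_apply, LinearMap.zero_apply] at h2
  simp only [sR_single, tR_single, one_smul, Sfun, map_zero, Tfun_10, Tfun_110,
    Tfun_1110, Tfun_11110, Tfun_111110, Finsupp.single_eq_zero] at h2
  exact one_ne_zero h2

lemma st2_apply (v : V) : ((sR * tR) ^ 2) v = sR (tR (sR (tR (v)))) := by
  simp [pow_succ, Module.End.mul_apply]

lemma st2_ne : ((sR * tR) ^ 2) ≠ 0 := by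
  intro h
  have h2 := LinearMap.congr_fun h (Finsupp.single [true, true, false, false] (1:ℚ))
  rw [st2_apply, LinearMap.zero_apply] at h2
  simp only [sR_single, tR_single, one_smul, Sfun, map_zero, Tfun_10, Tfun_110,
    Tfun_1110, Tfun_11110, Tfun_111110, Finsupp.single_eq_zero] at h2
  exact one_ne_zero h2

lemma t21_apply (v : V) : ((tR ^ 2) ^ 1) v = tR (tR (v)) := by
  simp [pow_succ, Module.End.mul_apply]

lemma t21_ne : ((tR ^ 2) ^ 1) ≠ 0 := by
  intro h
  have h2 := LinearMap.congr_fun h (Finsupp.single [true, false, false] (1:ℚ))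
  rw [t21_apply, LinearMap.zero_apply] at h2
  simp only [sR_single, tR_single, one_smul, Sfun, map_zero, Tfun_10, Tfun_110,
    Tfun_1110, Tfun_11110, Tfun_111110, Finsupp.single_eq_zero] at h2
  exact one_ne_zero h2

lemma tst3_apply (v : V) : ((tR * sR * tR) ^ 3) v = tR (sR (tR (tR (sR (tR (tR (sR (tR (v))))))))) := by
  simp [pow_succ, Module.End.mul_apply]

lemma tst3_ne : ((tR * sR * tR) ^ 3) ≠ 0 := by
  intro h
  have h2 := LinearMap.congr_fun h (Finsupp.single [true, true, true, false, false, false] (1:ℚ))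
  rw [tst3_apply, LinearMap.zero_apply] at h2
  simp only [sR_single, tR_single, one_smul, Sfun, map_zero, Tfun_10, Tfun_110,
    Tfun_1110, Tfun_11110, Tfun_111110, Finsupp.single_eq_zero] at h2
  exact one_ne_zero h2

lemma sts1_apply (v : V) : ((sR * tR * sR) ^ 1) v = sR (tR (sR (v))) := by
  simp [pow_succ, Module.End.mul_apply]

lemma sts1_ne : ((sR * tR * sR) ^ 1) ≠ 0 := by
  intro h
  have h2 := LinearMap.congr_fun h (Finsupp.single [false, true, false] (1:ℚ))
  rw [sts1_apply, LinearMap.zero_apply] at h2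
  simp only [sR_single, tR_single, one_smul, Sfun, map_zero, Tfun_10, Tfun_110,
    Tfun_1110, Tfun_11110, Tfun_111110, Finsupp.single_eq_zero] at h2
  exact one_ne_zero h2

lemma t2s3_apply (v : V) : ((tR ^ 2 * sR) ^ 3) v = tR (tR (sR (tR (tR (sR (tR (tR (sR (v))))))))) := by
  simp [pow_succ, Module.End.mul_apply]

lemma t2s3_ne : ((tR ^ 2 * sR) ^ 3) ≠ 0 := by
  intro h
  have h2 := LinearMap.congr_fun h (Finsupp.single [false, false, true, false, false] (1:ℚ))
  rw [t2s3_apply, LinearMap.zero_apply] at h2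
  simp only [sR_single, tR_single, one_smul, Sfun, map_zero, Tfun_10, Tfun_110,
    Tfun_1110, Tfun_11110, Tfun_111110, Finsupp.single_eq_zero] at h2
  exact one_ne_zero h2

lemma st23_apply (v : V) : ((sR * tR ^ 2) ^ 3) v = sR (tR (tR (sR (tR (tR (sR (tR (tR (v))))))))) := by
  simp [pow_succ, Module.End.mul_apply]

lemma st23_ne : ((sR * tR ^ 2) ^ 3) ≠ 0 := by
  intro h
  have h2 := LinearMap.congr_fun h (Finsupp.single [true, false, true, false, false] (1:ℚ))
  rw [st23_apply, LinearMap.zero_apply] at h2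
  simp only [sR_single, tR_single, one_smul, Sfun, map_zero, Tfun_10, Tfun_110,
    Tfun_1110, Tfun_11110, Tfun_111110, Finsupp.single_eq_zero] at h2
  exact one_ne_zero h2

/-- Nilpotency degrees of the short monomials of `R₂`:
`δ(s)=2, δ(t)=3, δ(ts)=4, δ(st)=3, δ(t²)=2, δ(tst)=4, δ(sts)=2, δ(t²s)=4, δ(st²)=4`. -/
theorem short_monomial_degrees :
    delta sR = 2 ∧
    delta tR = 3 ∧
    delta (tR * sR) = 4 ∧
    delta (sR * tR) = 3 ∧
    delta (tR ^ 2) = 2 ∧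
    delta (tR * sR * tR) = 4 ∧
    delta (sR * tR * sR) = 2 ∧
    delta (tR ^ 2 * sR) = 4 ∧
    delta (sR * tR ^ 2) = 4 :=
  ⟨delta_eq (by norm_num) sR2_zero s1_ne,
   delta_eq (by norm_num) tR3_zero t2_ne,
   delta_eq (by norm_num) ts4_zero ts3_ne,
   delta_eq (by norm_num) st3_zero st2_ne,
   delta_eq (by norm_num) t22_zero t21_ne,
   delta_eq (by norm_num) tst4_zero tst3_ne,
   delta_eq (by norm_num) sts2_zero sts1_ne,
   delta_eq (by norm_num) t2s4_zero t2s3_ne,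
   delta_eq (by norm_num) st24_zero st23_ne⟩

end
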